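/- Let (M, η, ξ, φ, g) be a 3-dimensional generalized (κ,μ)-space with κ < 1, let λ = √(1−κ), and let E be a unit eigenvector field of h with hE = λE. Then the Levi-Civita connection ∇ of g satisfies ∇_E E = (dλ(φE)/(2λ)) φE and ∇_{φE} φE = (dλ(E)/(2λ)) E. -/

import Mathlib

open scoped Manifold BigOperators

noncomputable section

/-- The differential `df` of a real valued function `f`, applied to a tangent vector `v`
at the point `x`. -/
def dd (d : ℕ) {M : Type*} [TopologicalSpace M]
    [ChartedSpace (EuclideanSpace ℝ (Fin d)) M]
    (f : M → ℝ) (x : M) (v : TangentSpace (𝓡 d) x) : ℝ :=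
  mfderiv (𝓡 d) 𝓘(ℝ) f x v

/-- A real valued function on a manifold is smooth. -/
def IsSmoothFn (d : ℕ) {M : Type*} [TopologicalSpace M]
    [ChartedSpace (EuclideanSpace ℝ (Fin d)) M] (f : M → ℝ) : Prop :=
  ContMDiff (𝓡 d) 𝓘(ℝ) (⊤ : ℕ∞) f

/-- A vector field (i.e. a section of the tangent bundle) is smooth. -/
def IsSmoothVF (d : ℕ) {M : Type*} [TopologicalSpace M]
    [ChartedSpace (EuclideanSpace ℝ (Fin d)) M]
    [IsManifold (𝓡 d) (⊤ : ℕ∞) M]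
    (V : ∀ x : M, TangentSpace (𝓡 d) x) : Prop :=
  ContMDiff (𝓡 d) (𝓡 d).tangent (⊤ : ℕ∞) (fun x => (⟨x, V x⟩ : TangentBundle (𝓡 d) M))

/-- A contact metric structure `(η, ξ, φ, g)` on a `d`-dimensional smooth manifold `M`,
together with the associated Levi-Civita connection `nabla`, Lie bracket `lie`,
tensor `h = (1/2) L_ξ φ`, Riemann curvature tensor `Rm`, Ricci operator `Q` and
scalar curvature `r`, each characterized by its defining axioms. -/
structure ContactMetricStructure (d : ℕ) (M : Type*) [TopologicalSpace M]
    [ChartedSpace (EuclideanSpace ℝ (Fin d)) M]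
    [IsManifold (𝓡 d) (⊤ : ℕ∞) M] where
  /-- the Riemannian metric -/
  g : ∀ x : M, TangentSpace (𝓡 d) x →ₗ[ℝ] TangentSpace (𝓡 d) x →ₗ[ℝ] ℝ
  /-- the contact form -/
  eta : ∀ x : M, TangentSpace (𝓡 d) x →ₗ[ℝ] ℝ
  /-- the Reeb vector field -/
  xi : ∀ x : M, TangentSpace (𝓡 d) x
  /-- the endomorphism field φ -/
  phi : ∀ x : M, TangentSpace (𝓡 d) x →ₗ[ℝ] TangentSpace (𝓡 d) x
  /-- the Lie bracket of vector fields -/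
  lie : (∀ x : M, TangentSpace (𝓡 d) x) → (∀ x : M, TangentSpace (𝓡 d) x) →
    (∀ x : M, TangentSpace (𝓡 d) x)
  /-- the Levi-Civita connection of `g` -/
  nabla : (∀ x : M, TangentSpace (𝓡 d) x) → (∀ x : M, TangentSpace (𝓡 d) x) →
    (∀ x : M, TangentSpace (𝓡 d) x)
  /-- the tensor field `h = (1/2) L_ξ φ` -/
  h : ∀ x : M, TangentSpace (𝓡 d) x →ₗ[ℝ] TangentSpace (𝓡 d) x
  /-- the Riemann curvature tensor, `Rm x u v w = R(U,V)W` pointwise -/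
  Rm : ∀ x : M, TangentSpace (𝓡 d) x →ₗ[ℝ] TangentSpace (𝓡 d) x →ₗ[ℝ]
    TangentSpace (𝓡 d) x →ₗ[ℝ] TangentSpace (𝓡 d) x
  /-- the Ricci operator -/
  Q : ∀ x : M, TangentSpace (𝓡 d) x →ₗ[ℝ] TangentSpace (𝓡 d) x
  /-- the scalar curvature -/
  r : M → ℝ
  -- smoothness of the data
  xi_smooth : IsSmoothVF d xi
  eta_smooth : ∀ X, IsSmoothVF d X → IsSmoothFn d (fun x => eta x (X x))
  g_smooth : ∀ X Y, IsSmoothVF d X → IsSmoothVF d Y →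
    IsSmoothFn d (fun x => g x (X x) (Y x))
  phi_smooth : ∀ X, IsSmoothVF d X → IsSmoothVF d (fun x => phi x (X x))
  h_smooth : ∀ X, IsSmoothVF d X → IsSmoothVF d (fun x => h x (X x))
  Q_smooth : ∀ X, IsSmoothVF d X → IsSmoothVF d (fun x => Q x (X x))
  r_smooth : IsSmoothFn d r
  lie_smooth : ∀ X Y, IsSmoothVF d X → IsSmoothVF d Y → IsSmoothVF d (lie X Y)
  nabla_smooth : ∀ X Y, IsSmoothVF d X → IsSmoothVF d Y → IsSmoothVF d (nabla X Y)
  -- `g` is a Riemannian metric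
  g_symm : ∀ x u v, g x u v = g x v u
  g_posdef : ∀ (x : M) (u : TangentSpace (𝓡 d) x), u ≠ 0 → 0 < g x u u
  -- characterization of the Lie bracket: `[X,Y] f = X (Y f) - Y (X f)`
  lie_def : ∀ X Y, IsSmoothVF d X → IsSmoothVF d Y → ∀ (f : M → ℝ), IsSmoothFn d f →
    ∀ x, dd d f x (lie X Y x) =
      dd d (fun y => dd d f y (Y y)) x (X x) - dd d (fun y => dd d f y (X y)) x (Y x)
  -- the contact metric axioms
  eta_xi : ∀ x, eta x (xi x) = 1
  eta_eq_g_xi : ∀ x u, eta x u = g x (xi x) u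
  phi_sq : ∀ (x : M) (u : TangentSpace (𝓡 d) x),
    phi x (phi x u) = -u + eta x u • xi x
  phi_xi : ∀ x, phi x (xi x) = 0
  -- `dη = 2 g(·, φ ·)`, with `dη(X,Y) = X(η(Y)) - Y(η(X)) - η([X,Y])`
  contact : ∀ X Y, IsSmoothVF d X → IsSmoothVF d Y → ∀ x,
    dd d (fun y => eta y (Y y)) x (X x) - dd d (fun y => eta y (X y)) x (Y x)
      - eta x (lie X Y x) = 2 * g x (X x) (phi x (Y x))
  -- `h = (1/2) L_ξ φ`, i.e. `2 h X = [ξ, φ X] - φ [ξ, X]`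
  h_def : ∀ X, IsSmoothVF d X → ∀ x,
    (2 : ℝ) • h x (X x) = lie xi (fun y => phi y (X y)) x - phi x (lie xi X x)
  -- `nabla` is the Levi-Civita connection of `g`
  nabla_add_left : ∀ X X' Y, IsSmoothVF d X → IsSmoothVF d X' → IsSmoothVF d Y →
    ∀ x, nabla (fun y => X y + X' y) Y x = nabla X Y x + nabla X' Y x
  nabla_smul_left : ∀ (f : M → ℝ) X Y, IsSmoothFn d f → IsSmoothVF d X → IsSmoothVF d Y →
    ∀ x, nabla (fun y => f y • X y) Y x = f x • nabla X Y x
  nabla_add_right : ∀ X Y Y', IsSmoothVF d X → IsSmoothVF d Y → IsSmoothVF d Y' →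
    ∀ x, nabla X (fun y => Y y + Y' y) x = nabla X Y x + nabla X Y' x
  nabla_leibniz : ∀ (f : M → ℝ) X Y, IsSmoothFn d f → IsSmoothVF d X → IsSmoothVF d Y →
    ∀ x, nabla X (fun y => f y • Y y) x = dd d f x (X x) • Y x + f x • nabla X Y x
  nabla_torsion_free : ∀ X Y, IsSmoothVF d X → IsSmoothVF d Y →
    ∀ x, nabla X Y x - nabla Y X x = lie X Y x
  nabla_metric : ∀ X Y Z, IsSmoothVF d X → IsSmoothVF d Y → IsSmoothVF d Z →
    ∀ x, dd d (fun y => g y (Y y) (Z y)) x (X x)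
      = g x (nabla X Y x) (Z x) + g x (Y x) (nabla X Z x)
  -- the curvature tensor: `R(X,Y)Z = ∇_X ∇_Y Z - ∇_Y ∇_X Z - ∇_[X,Y] Z`
  Rm_def : ∀ X Y Z, IsSmoothVF d X → IsSmoothVF d Y → IsSmoothVF d Z →
    ∀ x, Rm x (X x) (Y x) (Z x)
      = nabla X (nabla Y Z) x - nabla Y (nabla X Z) x - nabla (lie X Y) Z x
  -- existence of orthonormal frames, Ricci operator and scalar curvature as traces
  frame_exists : ∀ x : M, ∃ e : Fin d → TangentSpace (𝓡 d) x,
    ∀ i j, g x (e i) (e j) = if i = j then 1 else 0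
  Q_def : ∀ (x : M) (e : Fin d → TangentSpace (𝓡 d) x),
    (∀ i j, g x (e i) (e j) = if i = j then 1 else 0) →
    ∀ u v, g x (Q x u) v = ∑ i, g x (Rm x (e i) u v) (e i)
  r_def : ∀ (x : M) (e : Fin d → TangentSpace (𝓡 d) x),
    (∀ i j, g x (e i) (e j) = if i = j then 1 else 0) →
    r x = ∑ i, g x (Q x (e i)) (e i)

namespace ContactMetricStructure

variable {d : ℕ} {M : Type*} [TopologicalSpace M]
  [ChartedSpace (EuclideanSpace ℝ (Fin d)) M]
  [IsManifold (𝓡 d) (⊤ : ℕ∞) M]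

/-- A vector field `Z` is a Killing field (infinitesimal isometry): `L_Z g = 0`. -/
def IsKilling (S : ContactMetricStructure d M) (Z : ∀ x : M, TangentSpace (𝓡 d) x) : Prop :=
  IsSmoothVF d Z ∧ ∀ X Y, IsSmoothVF d X → IsSmoothVF d Y → ∀ x,
    dd d (fun y => S.g y (X y) (Y y)) x (Z x)
      = S.g x (S.lie Z X x) (Y x) + S.g x (X x) (S.lie Z Y x)

/-- A vector field `Z` preserves the contact form: `L_Z η = 0`. -/
def PreservesEta (S : ContactMetricStructure d M) (Z : ∀ x : M, TangentSpace (𝓡 d) x) : Prop :=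
  ∀ X, IsSmoothVF d X → ∀ x,
    dd d (fun y => S.eta y (X y)) x (Z x) = S.eta x (S.lie Z X x)

/-- An infinitesimal automorphism of the contact metric structure:
a Killing field which also preserves the contact form. -/
def IsInfinitesimalAutomorphism (S : ContactMetricStructure d M)
    (Z : ∀ x : M, TangentSpace (𝓡 d) x) : Prop :=
  S.IsKilling Z ∧ S.PreservesEta Z

/-- The structure is K-contact: the Reeb field is Killing. -/
def IsKContact (S : ContactMetricStructure d M) : Prop :=
  S.IsKilling S.xi

end ContactMetricStructure


section AuxLemmas

variable {d : ℕ} {M : Type*} [TopologicalSpace M]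
  [ChartedSpace (EuclideanSpace ℝ (Fin d)) M]
  [IsManifold (𝓡 d) (⊤ : ℕ∞) M]

theorem IsSmoothVF.smul' {f : M → ℝ} {X : ∀ x : M, TangentSpace (𝓡 d) x}
    (hf : IsSmoothFn d f) (hX : IsSmoothVF d X) :
    IsSmoothVF d (fun y => f y • X y) := by
  intro x₀
  have hX₀ := hX x₀
  rw [Bundle.contMDiffAt_section] at hX₀ ⊢
  refine ((hf x₀).smul hX₀).congr_of_eventuallyEq ?_
  filter_upwards [(trivializationAt (EuclideanSpace ℝ (Fin d)) (TangentSpace (𝓡 d))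
      x₀).open_baseSet.mem_nhds (mem_baseSet_trivializationAt _ _ x₀)] with y hy
  exact ((trivializationAt (EuclideanSpace ℝ (Fin d)) (TangentSpace (𝓡 d)) x₀).linear ℝ
    hy).map_smul _ _

theorem IsSmoothVF.add' {X Y : ∀ x : M, TangentSpace (𝓡 d) x}
    (hX : IsSmoothVF d X) (hY : IsSmoothVF d Y) :
    IsSmoothVF d (fun y => X y + Y y) := by
  intro x₀
  have hX₀ := hX x₀
  have hY₀ := hY x₀
  rw [Bundle.contMDiffAt_section] at hX₀ hY₀ ⊢
  refine (hX₀.add hY₀).congr_of_eventuallyEq ?_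
  filter_upwards [(trivializationAt (EuclideanSpace ℝ (Fin d)) (TangentSpace (𝓡 d))
      x₀).open_baseSet.mem_nhds (mem_baseSet_trivializationAt _ _ x₀)] with y hy
  exact ((trivializationAt (EuclideanSpace ℝ (Fin d)) (TangentSpace (𝓡 d)) x₀).linear ℝ
    hy).map_add _ _

theorem dd_const' (c : ℝ) (x : M) (v : TangentSpace (𝓡 d) x) :
    dd d (fun _ => c) x v = 0 := by
  simp [dd, mfderiv_const]
  rfl

theorem dd_affine' {f : M → ℝ} (hf : IsSmoothFn d f) (a b : ℝ) (x : M)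
    (v : TangentSpace (𝓡 d) x) :
    dd d (fun y => a * f y + b) x v = a * dd d f x v := by
  have h1 : HasMFDerivAt (𝓡 d) 𝓘(ℝ) f x (mfderiv (𝓡 d) 𝓘(ℝ) f x) :=
    ((hf x).mdifferentiableAt (by simp)).hasMFDerivAt
  have h2 : HasMFDerivAt (𝓡 d) 𝓘(ℝ) (fun y => a * f y + b) x
      (a • mfderiv (𝓡 d) 𝓘(ℝ) f x) := by
    have := (h1.const_smul a).add (hasMFDerivAt_const (I := 𝓡 d) (b : ℝ) x)
    have e1 : (a • f + fun _ => b) = fun y => a * f y + b := by funext y; simp [smul_eq_mul]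
    rw [e1] at this
    exact this.congr_mfderiv (add_zero _)
  rw [dd, h2.mfderiv]
  rfl

theorem expansion_of_orthonormal' {V : Type*} [AddCommGroup V] [Module ℝ V]
    [FiniteDimensional ℝ V] (hrank : Module.finrank ℝ V = 3)
    (B : V →ₗ[ℝ] V →ₗ[ℝ] ℝ) (u : Fin 3 → V)
    (hON : ∀ i j, B (u i) (u j) = if i = j then 1 else 0) (v : V) :
    v = B v (u 0) • u 0 + (B v (u 1) • u 1 + B v (u 2) • u 2) := by
  have li : LinearIndependent ℝ u := by
    rw [Fintype.linearIndependent_iff]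
    intro c hc j
    have h2 := congrArg (fun w => B w (u j)) hc
    simpa [map_sum, map_smul, hON, Finset.sum_ite_eq', mul_ite] using h2
  let b := basisOfLinearIndependentOfCardEqFinrank li (by simp [hrank])
  have hb : ⇑b = u := coe_basisOfLinearIndependentOfCardEqFinrank _ _
  have hv : ∑ i, b.repr v i • u i = v := by rw [← hb]; exact b.sum_repr v
  have hcoef : ∀ j, B v (u j) = b.repr v j := by
    intro j
    conv_lhs => rw [← hv]
    simp [map_sum, map_smul, hON, Finset.sum_ite_eq', mul_ite]
  calc v = ∑ i, b.repr v i • u i := hv.symm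
    _ = _ := by rw [Fin.sum_univ_three, hcoef 0, hcoef 1, hcoef 2, add_assoc]

end AuxLemmas

set_option maxHeartbeats 1600000 in
open ContactMetricStructure in
/-- On a 3-dimensional generalized (κ,μ)-space with `κ < 1`, `λ = √(1-κ)` and `E` a unit
eigenvector field of `h` with `hE = λE`, one has `∇_E E = (dλ(φE)/(2λ)) φE` and
`∇_{φE} φE = (dλ(E)/(2λ)) E`. -/
theorem statement_2 {M : Type*} [TopologicalSpace M]
    [ChartedSpace (EuclideanSpace ℝ (Fin 3)) M] [IsManifold (𝓡 3) (⊤ : ℕ∞) M]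
    (S : ContactMetricStructure 3 M)
    (κ μ : M → ℝ) (hκ : IsSmoothFn 3 κ) (hμ : IsSmoothFn 3 μ)
    (hkm : ∀ (x : M) (u v : TangentSpace (𝓡 3) x),
      S.Rm x u v (S.xi x) = κ x • (S.eta x v • u - S.eta x u • v)
        + μ x • (S.eta x v • S.h x u - S.eta x u • S.h x v))
    (hgen : (¬ ∃ c : ℝ, ∀ x, κ x = c) ∨ (¬ ∃ c : ℝ, ∀ x, μ x = c))
    (hκ1 : ∀ x, κ x < 1)
    (lam : M → ℝ) (hlam : ∀ x, lam x = Real.sqrt (1 - κ x))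
    (E : ∀ x : M, TangentSpace (𝓡 3) x) (hE : IsSmoothVF 3 E)
    (hEunit : ∀ x, S.g x (E x) (E x) = 1)
    (hEeig : ∀ x, S.h x (E x) = lam x • E x)
 :
    ∀ x : M,
      S.nabla E E x = (dd 3 lam x (S.phi x (E x)) / (2 * lam x)) • S.phi x (E x)
      ∧ S.nabla (fun y => S.phi y (E y)) (fun y => S.phi y (E y)) x
          = (dd 3 lam x (E x) / (2 * lam x)) • E x := by
  classical
  -- name the vector field φE
  obtain ⟨F, hFdef⟩ : ∃ F : ∀ y : M, TangentSpace (𝓡 3) y,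
      F = fun y => S.phi y (E y) := ⟨_, rfl⟩
  have hFx : ∀ y, F y = S.phi y (E y) := fun y => by rw [hFdef]
  have hsxi : IsSmoothVF 3 S.xi := S.xi_smooth
  have hsF : IsSmoothVF 3 F := by rw [hFdef]; exact S.phi_smooth E hE
  have hlampos : ∀ y, 0 < lam y := fun y => by
    rw [hlam y]; exact Real.sqrt_pos.mpr (by linarith [hκ1 y])
  have hslam : IsSmoothFn 3 lam := by
    have hl : lam = fun y => Real.sqrt (1 - κ y) := funext hlam
    rw [hl]; intro y
    have h1 : ContMDiffAt (𝓡 3) 𝓘(ℝ) (⊤ : ℕ∞) (fun t => 1 - κ t) y := (contMDiff_const.sub hκ) y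
    exact ContDiffAt.comp_contMDiffAt (g := Real.sqrt) (f := fun t => 1 - κ t)
      (Real.contDiffAt_sqrt (by show (1:ℝ) - κ y ≠ 0; have := hκ1 y; intro h; linarith)) h1
  -- bilinearity helpers
  have gaddl : ∀ (y : M) (u v w : TangentSpace (𝓡 3) y),
      S.g y (u + v) w = S.g y u w + S.g y v w := by
    intro y u v w; rw [map_add, LinearMap.add_apply]
  have gsubl : ∀ (y : M) (u v w : TangentSpace (𝓡 3) y),
      S.g y (u - v) w = S.g y u w - S.g y v w := by
    intro y u v w; rw [map_sub, LinearMap.sub_apply]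
  have gsmull : ∀ (y : M) (a : ℝ) (u w : TangentSpace (𝓡 3) y),
      S.g y (a • u) w = a * S.g y u w := by
    intro y a u w; rw [map_smul, LinearMap.smul_apply, smul_eq_mul]
  have gnegl : ∀ (y : M) (u w : TangentSpace (𝓡 3) y),
      S.g y (-u) w = - S.g y u w := by
    intro y u w; rw [map_neg, LinearMap.neg_apply]
  -- skew symmetry of g(·, φ·) on smooth fields
  have hskew : ∀ (X Y : ∀ y : M, TangentSpace (𝓡 3) y), IsSmoothVF 3 X → IsSmoothVF 3 Y →
      ∀ y, S.g y (X y) (S.phi y (Y y)) + S.g y (Y y) (S.phi y (X y)) = 0 := by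
    intro X Y hX hY y
    have h1 := S.contact X Y hX hY y
    have h2 := S.contact Y X hY hX y
    have h3 : S.lie X Y y = - S.lie Y X y := by
      have a1 := S.nabla_torsion_free X Y hX hY y
      have a2 := S.nabla_torsion_free Y X hY hX y
      rw [← a1, ← a2]; abel
    rw [h3, map_neg] at h1
    linarith
  have etaphi : ∀ (Z : ∀ y : M, TangentSpace (𝓡 3) y), IsSmoothVF 3 Z →
      ∀ y, S.g y (S.xi y) (S.phi y (Z y)) = 0 := by
    intro Z hZ y
    have h1 := hskew S.xi Z hsxi hZ y
    rw [S.phi_xi y] at h1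
    have h2 : S.g y (Z y) (0 : TangentSpace (𝓡 3) y) = 0 := map_zero _
    linarith
  -- orthonormality of the frame ξ, E, F
  have gxixi : ∀ y, S.g y (S.xi y) (S.xi y) = 1 := fun y => by
    rw [← S.eta_eq_g_xi, S.eta_xi]
  have gxiF : ∀ y, S.g y (S.xi y) (F y) = 0 := fun y => by
    rw [hFx]; exact etaphi E hE y
  have etaF : ∀ y, S.eta y (F y) = 0 := fun y => by rw [S.eta_eq_g_xi]; exact gxiF y
  have etaLieXiZ : ∀ (Z : ∀ y : M, TangentSpace (𝓡 3) y), IsSmoothVF 3 Z →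
      (∀ y, S.eta y (Z y) = 0) → ∀ y, S.eta y (S.lie S.xi Z y) = 0 := by
    intro Z hZ hZ0 y
    have hc := S.contact S.xi Z hsxi hZ y
    have e1 : (fun t => S.eta t (Z t)) = fun _ => (0 : ℝ) := funext hZ0
    have e2 : (fun t => S.eta t (S.xi t)) = fun _ => (1 : ℝ) := funext S.eta_xi
    rw [e1, e2, dd_const', dd_const'] at hc
    have e3 : S.g y (S.xi y) (S.phi y (Z y)) = 0 := etaphi Z hZ y
    linarith
  have etaE : ∀ y, S.eta y (E y) = 0 := by
    intro y
    have hh := S.h_def E hE y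
    rw [← hFdef] at hh
    have h1 := congrArg (S.eta y) hh
    rw [map_smul, map_sub] at h1
    have h2 : S.eta y (S.lie S.xi F y) = 0 := etaLieXiZ F hsF etaF y
    have h3 : S.eta y (S.phi y (S.lie S.xi E y)) = 0 := by
      rw [S.eta_eq_g_xi]; exact etaphi (S.lie S.xi E) (S.lie_smooth S.xi E hsxi hE) y
    rw [hEeig y, map_smul, h2, h3] at h1
    have h4 : (2 : ℝ) • (lam y • S.eta y (E y)) = 0 := by rw [h1]; ring
    have h5 : lam y ≠ 0 := ne_of_gt (hlampos y)
    simp only [smul_eq_mul] at h4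
    rcases mul_eq_zero.mp h4 with h | h
    · norm_num at h
    rcases mul_eq_zero.mp h with h' | h'
    · exact absurd h' h5
    · exact h'
  have gxiE : ∀ y, S.g y (S.xi y) (E y) = 0 := fun y => by
    rw [← S.eta_eq_g_xi]; exact etaE y
  have gEF : ∀ y, S.g y (E y) (F y) = 0 := by
    intro y
    have h1 := hskew E E hE hE y
    rw [← hFx y] at h1
    linarith
  have phiF : ∀ y, S.phi y (F y) = - E y := by
    intro y
    rw [hFx y, S.phi_sq y (E y), etaE y, zero_smul, add_zero]
  have gFF : ∀ y, S.g y (F y) (F y) = 1 := by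
    intro y
    have h1 := hskew E F hE hsF y
    rw [phiF y, ← hFx y] at h1
    have h2 : S.g y (E y) (- E y) = - S.g y (E y) (E y) := map_neg _ _
    rw [h2, hEunit y] at h1
    linarith
  -- expansion in the orthonormal frame
  have expand : ∀ (y : M) (v : TangentSpace (𝓡 3) y),
      v = S.g y v (S.xi y) • S.xi y + (S.g y v (E y) • E y + S.g y v (F y) • F y) := by
    intro y v
    haveI : FiniteDimensional ℝ (TangentSpace (𝓡 3) y) :=
      inferInstanceAs (FiniteDimensional ℝ (EuclideanSpace ℝ (Fin 3)))
    have hrank : Module.finrank ℝ (TangentSpace (𝓡 3) y) = 3 := finrank_euclideanSpace_fin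
    have hON : ∀ i j, S.g y (![S.xi y, E y, F y] i) (![S.xi y, E y, F y] j)
        = if i = j then 1 else 0 := by
      intro i j
      fin_cases i <;> fin_cases j <;>
        simp [gxixi y, gxiE y, gxiF y, gEF y, gFF y, hEunit y,
          S.g_symm y (E y) (S.xi y), S.g_symm y (F y) (S.xi y), S.g_symm y (F y) (E y)]
    have := expansion_of_orthonormal' hrank (S.g y) ![S.xi y, E y, F y] hON v
    simpa using this
  -- Parseval identity
  have pars : ∀ (y : M) (u w : TangentSpace (𝓡 3) y),
      S.g y u w = S.g y u (S.xi y) * S.g y w (S.xi y) + S.g y u (E y) * S.g y w (E y)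
        + S.g y u (F y) * S.g y w (F y) := by
    intro y u w
    conv_lhs => rw [expand y u]
    rw [gaddl, gaddl, gsmull, gsmull, gsmull,
      S.g_symm y (S.xi y) w, S.g_symm y (E y) w, S.g_symm y (F y) w]
    ring
  -- metric compatibility helpers
  have compatc : ∀ (X Y Z : ∀ y : M, TangentSpace (𝓡 3) y),
      IsSmoothVF 3 X → IsSmoothVF 3 Y → IsSmoothVF 3 Z → ∀ (c : ℝ),
      ((fun y => S.g y (Y y) (Z y)) = fun _ => c) →
      ∀ y, S.g y (S.nabla X Y y) (Z y) = - S.g y (Y y) (S.nabla X Z y) := by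
    intro X Y Z hX hY hZ c hc y
    have hm := S.nabla_metric X Y Z hX hY hZ y
    rw [hc, dd_const'] at hm
    linarith
  have diag0 : ∀ (X Y : ∀ y : M, TangentSpace (𝓡 3) y),
      IsSmoothVF 3 X → IsSmoothVF 3 Y → ∀ (c : ℝ),
      ((fun y => S.g y (Y y) (Y y)) = fun _ => c) →
      ∀ y, S.g y (S.nabla X Y y) (Y y) = 0 := by
    intro X Y hX hY c hc y
    have h := compatc X Y Y hX hY hY c hc y
    rw [S.g_symm y (Y y) (S.nabla X Y y)] at h
    linarith
  -- constant products
  have pxixi : (fun y => S.g y (S.xi y) (S.xi y)) = fun _ => (1:ℝ) := funext gxixi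
  have pEE : (fun y => S.g y (E y) (E y)) = fun _ => (1:ℝ) := funext hEunit
  have pFF : (fun y => S.g y (F y) (F y)) = fun _ => (1:ℝ) := funext gFF
  have pxiE : (fun y => S.g y (S.xi y) (E y)) = fun _ => (0:ℝ) := funext gxiE
  have pxiF : (fun y => S.g y (S.xi y) (F y)) = fun _ => (0:ℝ) := funext gxiF
  have pEF : (fun y => S.g y (E y) (F y)) = fun _ => (0:ℝ) := funext gEF
  have pExi : (fun y => S.g y (E y) (S.xi y)) = fun _ => (0:ℝ) :=
    funext fun y => by rw [S.g_symm]; exact gxiE y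
  have pFxi : (fun y => S.g y (F y) (S.xi y)) = fun _ => (0:ℝ) :=
    funext fun y => by rw [S.g_symm]; exact gxiF y
  have pFE : (fun y => S.g y (F y) (E y)) = fun _ => (0:ℝ) :=
    funext fun y => by rw [S.g_symm]; exact gEF y
  -- table of zero entries
  have n1 : ∀ y, S.g y (S.nabla S.xi S.xi y) (S.xi y) = 0 := diag0 S.xi S.xi hsxi hsxi 1 pxixi
  have n2 : ∀ y, S.g y (S.nabla E S.xi y) (S.xi y) = 0 := diag0 E S.xi hE hsxi 1 pxixi
  have n3 : ∀ y, S.g y (S.nabla F S.xi y) (S.xi y) = 0 := diag0 F S.xi hsF hsxi 1 pxixi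
  have n4 : ∀ y, S.g y (S.nabla S.xi E y) (E y) = 0 := diag0 S.xi E hsxi hE 1 pEE
  have n5 : ∀ y, S.g y (S.nabla E E y) (E y) = 0 := diag0 E E hE hE 1 pEE
  have n6 : ∀ y, S.g y (S.nabla F E y) (E y) = 0 := diag0 F E hsF hE 1 pEE
  have n7 : ∀ y, S.g y (S.nabla S.xi F y) (F y) = 0 := diag0 S.xi F hsxi hsF 1 pFF
  have n8 : ∀ y, S.g y (S.nabla E F y) (F y) = 0 := diag0 E F hE hsF 1 pFF
  have n9 : ∀ y, S.g y (S.nabla F F y) (F y) = 0 := diag0 F F hsF hsF 1 pFF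
  -- eta of brackets with ξ
  have etaLieXiE : ∀ y, S.eta y (S.lie S.xi E y) = 0 := etaLieXiZ E hE etaE
  have etaLieXiF : ∀ y, S.eta y (S.lie S.xi F y) = 0 := etaLieXiZ F hsF etaF
  -- n10, n11 : g(∇_ξ E, ξ) = 0 and g(∇_ξ F, ξ) = 0
  have lieval : ∀ (X Y : ∀ y : M, TangentSpace (𝓡 3) y), IsSmoothVF 3 X → IsSmoothVF 3 Y →
      ∀ y, S.lie X Y y = S.nabla X Y y - S.nabla Y X y :=
    fun X Y hX hY y => (S.nabla_torsion_free X Y hX hY y).symm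
  have n10 : ∀ y, S.g y (S.nabla S.xi E y) (S.xi y) = 0 := by
    intro y
    have h1 := etaLieXiE y
    rw [S.eta_eq_g_xi, lieval S.xi E hsxi hE y, map_sub,
      S.g_symm y (S.xi y) (S.nabla S.xi E y), S.g_symm y (S.xi y) (S.nabla E S.xi y)] at h1
    have := n2 y
    linarith
  have n11 : ∀ y, S.g y (S.nabla S.xi F y) (S.xi y) = 0 := by
    intro y
    have h1 := etaLieXiF y
    rw [S.eta_eq_g_xi, lieval S.xi F hsxi hsF y, map_sub,
      S.g_symm y (S.xi y) (S.nabla S.xi F y), S.g_symm y (S.xi y) (S.nabla F S.xi y)] at h1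
    have := n3 y
    linarith
  have n12 : ∀ y, S.g y (S.nabla S.xi F y) (E y) = - S.g y (S.nabla S.xi E y) (F y) := by
    intro y
    have h := compatc S.xi E F hsxi hE hsF 0 pEF y
    rw [S.g_symm y (E y) (S.nabla S.xi F y)] at h
    linarith
  -- the components of [ξ,E]
  have uxic : ∀ y, S.g y (S.lie S.xi E y) (S.xi y) = 0 := by
    intro y
    have h1 := etaLieXiE y
    rw [S.eta_eq_g_xi, S.g_symm y (S.xi y) (S.lie S.xi E y)] at h1
    exact h1
  have uEc : ∀ y, S.g y (S.lie S.xi E y) (E y) = - S.g y (S.nabla E S.xi y) (E y) := by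
    intro y
    rw [lieval S.xi E hsxi hE y, gsubl, n4 y]
    ring
  have uFc : ∀ y, S.g y (S.lie S.xi E y) (F y)
      = S.g y (S.nabla S.xi E y) (F y) - S.g y (S.nabla E S.xi y) (F y) := by
    intro y
    rw [lieval S.xi E hsxi hE y, gsubl]
  -- φ([ξ,E])
  have phiu : ∀ y, S.phi y (S.lie S.xi E y)
      = S.g y (S.lie S.xi E y) (E y) • F y - S.g y (S.lie S.xi E y) (F y) • E y := by
    intro y
    have he := expand y (S.lie S.xi E y)
    have h1 := congrArg (S.phi y) he
    rw [map_add, map_add, map_smul, map_smul, map_smul, S.phi_xi, phiF y, ← hFx y] at h1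
    simp only [uxic y, zero_smul, smul_zero, zero_add, smul_neg] at h1
    rw [h1]
    abel
  -- the key relation 2 h E = [ξ, φE] - φ[ξ,E] evaluated on E and F
  have hstar : ∀ y, (2:ℝ) • (lam y • E y) = S.lie S.xi F y - S.phi y (S.lie S.xi E y) := by
    intro y
    have hh := S.h_def E hE y
    rw [← hFdef, hEeig y] at hh
    exact hh
  have gLieXiF_F : ∀ y, S.g y (S.lie S.xi F y) (F y) = - S.g y (S.nabla F S.xi y) (F y) := by
    intro y
    rw [lieval S.xi F hsxi hsF y, gsubl, n7 y]
    ring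
  have gLieXiF_E : ∀ y, S.g y (S.lie S.xi F y) (E y)
      = - S.g y (S.nabla S.xi E y) (F y) - S.g y (S.nabla F S.xi y) (E y) := by
    intro y
    rw [lieval S.xi F hsxi hsF y, gsubl, n12 y]
  have gPhiu_F : ∀ y, S.g y (S.phi y (S.lie S.xi E y)) (F y)
      = - S.g y (S.nabla E S.xi y) (E y) := by
    intro y
    rw [phiu y, gsubl, gsmull, gsmull, gFF y, gEF y, uEc y]
    ring
  have gPhiu_E : ∀ y, S.g y (S.phi y (S.lie S.xi E y)) (E y)
      = - S.g y (S.lie S.xi E y) (F y) := by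
    intro y
    rw [phiu y, gsubl, gsmull, gsmull, S.g_symm y (F y) (E y), gEF y, hEunit y]
    ring
  have bFeq : ∀ y, S.g y (S.nabla F S.xi y) (F y) = S.g y (S.nabla E S.xi y) (E y) := by
    intro y
    have h1 : S.g y ((2:ℝ) • (lam y • E y)) (F y)
        = S.g y (S.lie S.xi F y - S.phi y (S.lie S.xi E y)) (F y) := by rw [hstar y]
    rw [gsmull, gsmull, gEF y, gsubl, gLieXiF_F y, gPhiu_F y] at h1
    linarith
  have etaLieEF : ∀ y, S.g y (S.lie E F y) (S.xi y) = 2 := by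
    intro y
    have hc := S.contact E F hE hsF y
    have e1 : (fun t => S.eta t (F t)) = fun _ => (0:ℝ) := funext etaF
    have e2 : (fun t => S.eta t (E t)) = fun _ => (0:ℝ) := funext etaE
    rw [e1, e2, dd_const', dd_const'] at hc
    have e3 : S.g y (E y) (S.phi y (F y)) = -1 := by
      rw [phiF y]
      have : S.g y (E y) (- E y) = - S.g y (E y) (E y) := map_neg _ _
      rw [this, hEunit y]
    rw [e3] at hc
    rw [S.eta_eq_g_xi, S.g_symm y (S.xi y) (S.lie E F y)] at hc
    linarith
  have R2 : ∀ y, S.g y (S.nabla E S.xi y) (F y) - S.g y (S.nabla F S.xi y) (E y) = -2 := by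
    intro y
    have h1 := etaLieEF y
    rw [lieval E F hE hsF y, gsubl] at h1
    have h2 := compatc E F S.xi hE hsF hsxi 0 pFxi y
    have h3 := compatc F E S.xi hsF hE hsxi 0 pExi y
    rw [S.g_symm y (F y) (S.nabla E S.xi y)] at h2
    rw [S.g_symm y (E y) (S.nabla F S.xi y)] at h3
    linarith
  have R1 : ∀ y, S.g y (S.nabla F S.xi y) (E y) + S.g y (S.nabla E S.xi y) (F y)
      = - (2 * lam y) := by
    intro y
    have h1 : S.g y ((2:ℝ) • (lam y • E y)) (E y)
        = S.g y (S.lie S.xi F y - S.phi y (S.lie S.xi E y)) (E y) := by rw [hstar y]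
    rw [gsmull, gsmull, hEunit y, gsubl, gLieXiF_E y, gPhiu_E y, uFc y] at h1
    linarith
  have bEval : ∀ y, S.g y (S.nabla E S.xi y) (F y) = -(1 + lam y) := by
    intro y; have := R1 y; have := R2 y; linarith
  have aFval : ∀ y, S.g y (S.nabla F S.xi y) (E y) = 1 - lam y := by
    intro y; have := R1 y; have := R2 y; linarith
  -- rest of the Christoffel table
  have hsNExi := S.nabla_smooth E S.xi hE hsxi
  have hsNFxi := S.nabla_smooth F S.xi hsF hsxi
  have hsNxiE := S.nabla_smooth S.xi E hsxi hE
  have hsNxixi := S.nabla_smooth S.xi S.xi hsxi hsxi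
  have hsNEE := S.nabla_smooth E E hE hE
  have hsNFE := S.nabla_smooth F E hsF hE
  have hsNEF := S.nabla_smooth E F hE hsF
  have hsNFF := S.nabla_smooth F F hsF hsF
  have n13 : ∀ y, S.g y (S.nabla E E y) (S.xi y) = - S.g y (S.nabla E S.xi y) (E y) := by
    intro y
    have h := compatc E E S.xi hE hE hsxi 0 pExi y
    rw [S.g_symm y (E y) (S.nabla E S.xi y)] at h
    exact h
  have n14 : ∀ y, S.g y (S.nabla E F y) (S.xi y) = 1 + lam y := by
    intro y
    have h := compatc E F S.xi hE hsF hsxi 0 pFxi y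
    rw [S.g_symm y (F y) (S.nabla E S.xi y), bEval y] at h
    rw [h]; ring
  have n15 : ∀ y, S.g y (S.nabla E F y) (E y) = - S.g y (S.nabla E E y) (F y) := by
    intro y
    have h := compatc E F E hE hsF hE 0 pFE y
    rw [S.g_symm y (F y) (S.nabla E E y)] at h
    exact h
  have n16 : ∀ y, S.g y (S.nabla F E y) (S.xi y) = lam y - 1 := by
    intro y
    have h := compatc F E S.xi hsF hE hsxi 0 pExi y
    rw [S.g_symm y (E y) (S.nabla F S.xi y), aFval y] at h
    rw [h]; ring
  have n17 : ∀ y, S.g y (S.nabla F F y) (S.xi y) = - S.g y (S.nabla E S.xi y) (E y) := by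
    intro y
    have h := compatc F F S.xi hsF hsF hsxi 0 pFxi y
    rw [S.g_symm y (F y) (S.nabla F S.xi y), bFeq y] at h
    exact h
  have n18 : ∀ y, S.g y (S.nabla F F y) (E y) = - S.g y (S.nabla F E y) (F y) := by
    intro y
    have h := compatc F F E hsF hsF hE 0 pFE y
    rw [S.g_symm y (F y) (S.nabla F E y)] at h
    exact h
  have n19 : ∀ y, S.g y (S.nabla S.xi S.xi y) (E y) = 0 := by
    intro y
    have h := compatc S.xi S.xi E hsxi hsxi hE 0 pxiE y
    rw [S.g_symm y (S.xi y) (S.nabla S.xi E y), n10 y] at h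
    rw [h]; ring
  have n20 : ∀ y, S.g y (S.nabla S.xi S.xi y) (F y) = 0 := by
    intro y
    have h := compatc S.xi S.xi F hsxi hsxi hsF 0 pxiF y
    rw [S.g_symm y (S.xi y) (S.nabla S.xi F y), n11 y] at h
    rw [h]; ring
  -- smoothness of the relevant component functions
  have hsaE : IsSmoothFn 3 (fun y => S.g y (S.nabla E S.xi y) (E y)) :=
    S.g_smooth _ _ hsNExi hE
  have hscxi : IsSmoothFn 3 (fun y => S.g y (S.nabla S.xi E y) (F y)) :=
    S.g_smooth _ _ hsNxiE hsF
  have hsaF : IsSmoothFn 3 (fun y => S.g y (S.nabla F S.xi y) (E y)) :=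
    S.g_smooth _ _ hsNFxi hE
  have hscE : IsSmoothFn 3 (fun y => S.g y (S.nabla E E y) (F y)) :=
    S.g_smooth _ _ hsNEE hsF
  have hscF : IsSmoothFn 3 (fun y => S.g y (S.nabla F E y) (F y)) :=
    S.g_smooth _ _ hsNFE hsF
  -- function level identities
  have fbE : (fun y => S.g y (S.nabla E S.xi y) (F y)) = fun y => (-1) * lam y + (-1) :=
    funext fun y => by rw [bEval y]; ring
  have faF : (fun y => S.g y (S.nabla F S.xi y) (E y)) = fun y => (-1) * lam y + 1 :=
    funext fun y => by rw [aFval y]; ring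
  have fxixiE : (fun y => S.g y (S.nabla S.xi S.xi y) (E y)) = fun _ => (0:ℝ) := funext n19
  have fxixiF : (fun y => S.g y (S.nabla S.xi S.xi y) (F y)) = fun _ => (0:ℝ) := funext n20
  -- h F has no E-component
  have halpha : ∀ y, S.phi y (S.lie S.xi F y)
      = (2 * lam y) • F y - S.lie S.xi E y := by
    intro y
    have h1 := congrArg (S.phi y) (hstar y)
    rw [map_smul, map_smul, ← hFx y, map_sub, S.phi_sq y (S.lie S.xi E y)] at h1
    rw [S.eta_eq_g_xi, S.g_symm y (S.xi y) (S.lie S.xi E y), uxic y, zero_smul, add_zero] at h1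
    rw [sub_neg_eq_add] at h1
    rw [smul_smul] at h1
    exact eq_sub_of_add_eq h1.symm
  have gHFE : ∀ y, S.g y (S.h y (F y)) (E y) = 0 := by
    intro y
    have hh := S.h_def F hsF y
    have hphiF : (fun t => S.phi t (F t)) = fun t => (-1:ℝ) • E t :=
      funext fun t => by rw [phiF t]; exact (neg_one_smul ℝ (E t)).symm
    rw [hphiF] at hh
    have hsmE : IsSmoothVF 3 (fun t => (-1:ℝ) • E t) :=
      IsSmoothVF.smul' contMDiff_const hE
    have h2 : S.nabla S.xi (fun t => (-1:ℝ) • E t) y = (-1:ℝ) • S.nabla S.xi E y := by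
      have := S.nabla_leibniz (fun _ => (-1:ℝ)) S.xi E contMDiff_const hsxi hE y
      rw [dd_const', zero_smul, zero_add] at this
      exact this
    have h3 : S.nabla (fun t => (-1:ℝ) • E t) S.xi y = (-1:ℝ) • S.nabla E S.xi y :=
      S.nabla_smul_left (fun _ => (-1:ℝ)) E S.xi contMDiff_const hE hsxi y
    have h5 : S.lie S.xi (fun t => (-1:ℝ) • E t) y = - S.lie S.xi E y := by
      rw [lieval S.xi (fun t => (-1:ℝ) • E t) hsxi hsmE y, h2, h3,
        lieval S.xi E hsxi hE y]
      simp only [neg_one_smul]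
      abel
    rw [h5, halpha y] at hh
    have hv : -S.lie S.xi E y - ((2 * lam y) • F y - S.lie S.xi E y)
        = -((2 * lam y) • F y) := by abel
    rw [hv] at hh
    have h4 : S.g y ((2:ℝ) • S.h y (F y)) (E y) = S.g y (-((2 * lam y) • F y)) (E y) := by
      rw [hh]
    rw [gsmull, gnegl, gsmull, S.g_symm y (F y) (E y), gEF y] at h4
    linarith
  -- Equation A : from the F-component of R(ξ,E)ξ
  have eqA : ∀ y, dd 3 lam y (S.xi y) + 2 * S.g y (S.nabla E S.xi y) (E y)
      + 2 * lam y * S.g y (S.nabla E S.xi y) (E y) = 0 := by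
    intro y
    have hRA := S.Rm_def S.xi E S.xi hsxi hE hsxi y
    have hkmA : S.g y (S.Rm y (S.xi y) (E y) (S.xi y)) (F y) = 0 := by
      rw [hkm y (S.xi y) (E y), hEeig y, etaE y, S.eta_xi y]
      simp only [zero_smul, one_smul, zero_sub, smul_neg]
      rw [gaddl, gnegl, gnegl, gsmull, gsmull, gsmull, gEF y]
      ring
    have h2 : S.g y (S.nabla S.xi (S.nabla E S.xi) y) (F y)
        - S.g y (S.nabla E (S.nabla S.xi S.xi) y) (F y)
        - S.g y (S.nabla (S.lie S.xi E) S.xi y) (F y) = 0 := by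
      rw [← gsubl, ← gsubl, ← hRA]
      exact hkmA
    have hm := S.nabla_metric S.xi (S.nabla E S.xi) F hsxi hsNExi hsF y
    rw [fbE, dd_affine' hslam (-1) (-1)] at hm
    have hp := pars y (S.nabla E S.xi y) (S.nabla S.xi F y)
    rw [n2 y, n11 y, n12 y, n7 y, bEval y] at hp
    have hm2 := S.nabla_metric E (S.nabla S.xi S.xi) F hE hsNxixi hsF y
    rw [fxixiF, dd_const'] at hm2
    have hp2 := pars y (S.nabla S.xi S.xi y) (S.nabla E F y)
    rw [n1 y, n19 y, n20 y] at hp2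
    -- decomposition of [ξ,E]
    have uFc2 : ∀ t, S.g t (S.lie S.xi E t) (F t)
        = S.g t (S.nabla S.xi E t) (F t) + (1 + lam t) := by
      intro t; rw [uFc t, bEval t]; ring
    have hdecXiE : S.lie S.xi E = fun t =>
        (- S.g t (S.nabla E S.xi t) (E t)) • E t
        + (S.g t (S.nabla S.xi E t) (F t) + (1 + lam t)) • F t := by
      funext t
      have he := expand t (S.lie S.xi E t)
      rw [uxic t, zero_smul, zero_add, uEc t, uFc2 t] at he
      exact he
    have hfA : IsSmoothFn 3 (fun t => - S.g t (S.nabla E S.xi t) (E t)) := hsaE.neg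
    have hfB : IsSmoothFn 3 (fun t => S.g t (S.nabla S.xi E t) (F t) + (1 + lam t)) :=
      hscxi.add (contMDiff_const.add hslam)
    have hA : IsSmoothVF 3 (fun t => (- S.g t (S.nabla E S.xi t) (E t)) • E t) :=
      IsSmoothVF.smul' hfA hE
    have hB : IsSmoothVF 3
        (fun t => (S.g t (S.nabla S.xi E t) (F t) + (1 + lam t)) • F t) :=
      IsSmoothVF.smul' hfB hsF
    have hT3 : S.g y (S.nabla (S.lie S.xi E) S.xi y) (F y)
        = (- S.g y (S.nabla E S.xi y) (E y)) * (-(1 + lam y))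
          + (S.g y (S.nabla S.xi E y) (F y) + (1 + lam y))
            * S.g y (S.nabla E S.xi y) (E y) := by
      rw [hdecXiE, S.nabla_add_left _ _ S.xi hA hB hsxi y,
        S.nabla_smul_left _ E S.xi hfA hE hsxi y,
        S.nabla_smul_left _ F S.xi hfB hsF hsxi y,
        gaddl, gsmull, gsmull, bEval y, bFeq y]
    linarith
  -- Equation B : from the E-component of R(ξ,F)ξ
  have eqB : ∀ y, dd 3 lam y (S.xi y) - 2 * S.g y (S.nabla E S.xi y) (E y)
      + 2 * lam y * S.g y (S.nabla E S.xi y) (E y) = 0 := by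
    intro y
    have hRB := S.Rm_def S.xi F S.xi hsxi hsF hsxi y
    have hkmB : S.g y (S.Rm y (S.xi y) (F y) (S.xi y)) (E y) = 0 := by
      rw [hkm y (S.xi y) (F y), etaF y, S.eta_xi y]
      simp only [zero_smul, one_smul, zero_sub, smul_neg]
      rw [gaddl, gnegl, gnegl, gsmull, gsmull, S.g_symm y (F y) (E y), gEF y, gHFE y]
      ring
    have h2 : S.g y (S.nabla S.xi (S.nabla F S.xi) y) (E y)
        - S.g y (S.nabla F (S.nabla S.xi S.xi) y) (E y)
        - S.g y (S.nabla (S.lie S.xi F) S.xi y) (E y) = 0 := by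
      rw [← gsubl, ← gsubl, ← hRB]
      exact hkmB
    have hm := S.nabla_metric S.xi (S.nabla F S.xi) E hsxi hsNFxi hE y
    rw [faF, dd_affine' hslam (-1) 1] at hm
    have hp := pars y (S.nabla F S.xi y) (S.nabla S.xi E y)
    rw [n3 y, n10 y, n4 y, aFval y, bFeq y] at hp
    have hm2 := S.nabla_metric F (S.nabla S.xi S.xi) E hsF hsNxixi hE y
    rw [fxixiE, dd_const'] at hm2
    have hp2 := pars y (S.nabla S.xi S.xi y) (S.nabla F E y)
    rw [n1 y, n19 y, n20 y] at hp2
    -- decomposition of [ξ,F]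
    have vxic : ∀ t, S.g t (S.lie S.xi F t) (S.xi t) = 0 := by
      intro t
      have h1 := etaLieXiF t
      rw [S.eta_eq_g_xi, S.g_symm t (S.xi t) (S.lie S.xi F t)] at h1
      exact h1
    have hdecXiF : S.lie S.xi F = fun t =>
        (- S.g t (S.nabla S.xi E t) (F t) - S.g t (S.nabla F S.xi t) (E t)) • E t
        + (- S.g t (S.nabla E S.xi t) (E t)) • F t := by
      funext t
      have he := expand t (S.lie S.xi F t)
      rw [vxic t, zero_smul, zero_add, gLieXiF_E t, gLieXiF_F t, bFeq t] at he
      exact he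
    have hfA : IsSmoothFn 3 (fun t =>
        - S.g t (S.nabla S.xi E t) (F t) - S.g t (S.nabla F S.xi t) (E t)) :=
      hscxi.neg.sub hsaF
    have hfB : IsSmoothFn 3 (fun t => - S.g t (S.nabla E S.xi t) (E t)) := hsaE.neg
    have hA : IsSmoothVF 3 (fun t =>
        (- S.g t (S.nabla S.xi E t) (F t) - S.g t (S.nabla F S.xi t) (E t)) • E t) :=
      IsSmoothVF.smul' hfA hE
    have hB : IsSmoothVF 3 (fun t => (- S.g t (S.nabla E S.xi t) (E t)) • F t) :=
      IsSmoothVF.smul' hfB hsF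
    have hT3 : S.g y (S.nabla (S.lie S.xi F) S.xi y) (E y)
        = (- S.g y (S.nabla S.xi E y) (F y) - (1 - lam y))
            * S.g y (S.nabla E S.xi y) (E y)
          + (- S.g y (S.nabla E S.xi y) (E y)) * (1 - lam y) := by
      rw [hdecXiF, S.nabla_add_left _ _ S.xi hA hB hsxi y,
        S.nabla_smul_left _ E S.xi hfA hE hsxi y,
        S.nabla_smul_left _ F S.xi hfB hsF hsxi y,
        gaddl, gsmull, gsmull, aFval y]
    linarith
  -- vanishing of g(∇_E ξ, E)
  have aE0 : ∀ y, S.g y (S.nabla E S.xi y) (E y) = 0 := by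
    intro y
    have h1 := eqA y
    have h2 := eqB y
    linarith
  have faE0 : (fun y => S.g y (S.nabla E S.xi y) (E y)) = fun _ => (0:ℝ) := funext aE0
  have fbF0 : (fun y => S.g y (S.nabla F S.xi y) (F y)) = fun _ => (0:ℝ) :=
    funext fun y => by rw [bFeq y, aE0 y]
  -- decomposition of [E,F]
  have wEc : ∀ t, S.g t (S.lie E F t) (E t) = - S.g t (S.nabla E E t) (F t) := by
    intro t; rw [lieval E F hE hsF t, gsubl, n15 t, n6 t]; ring
  have wFc : ∀ t, S.g t (S.lie E F t) (F t) = - S.g t (S.nabla F E t) (F t) := by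
    intro t; rw [lieval E F hE hsF t, gsubl, n8 t]; ring
  have hdecEF : S.lie E F = fun t => (2:ℝ) • S.xi t
      + ((- S.g t (S.nabla E E t) (F t)) • E t
        + (- S.g t (S.nabla F E t) (F t)) • F t) := by
    funext t
    have he := expand t (S.lie E F t)
    rw [etaLieEF t, wEc t, wFc t] at he
    exact he
  have hsLieEF := S.lie_smooth E F hE hsF
  have hA2 : IsSmoothVF 3 (fun t => (2:ℝ) • S.xi t) :=
    IsSmoothVF.smul' contMDiff_const hsxi
  have hBE : IsSmoothVF 3 (fun t => (- S.g t (S.nabla E E t) (F t)) • E t) :=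
    IsSmoothVF.smul' hscE.neg hE
  have hBF : IsSmoothVF 3 (fun t => (- S.g t (S.nabla F E t) (F t)) • F t) :=
    IsSmoothVF.smul' hscF.neg hsF
  have hB2 : IsSmoothVF 3 (fun t => (- S.g t (S.nabla E E t) (F t)) • E t
      + (- S.g t (S.nabla F E t) (F t)) • F t) := hBE.add' hBF
  have hnabEF : ∀ y, S.nabla (S.lie E F) S.xi y
      = (2:ℝ) • S.nabla S.xi S.xi y
        + ((- S.g y (S.nabla E E y) (F y)) • S.nabla E S.xi y
          + (- S.g y (S.nabla F E y) (F y)) • S.nabla F S.xi y) := by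
    intro y
    rw [hdecEF, S.nabla_add_left _ _ S.xi hA2 hB2 hsxi y,
      S.nabla_smul_left _ S.xi S.xi contMDiff_const hsxi hsxi y,
      S.nabla_add_left _ _ S.xi hBE hBF hsxi y,
      S.nabla_smul_left _ E S.xi hscE.neg hE hsxi y,
      S.nabla_smul_left _ F S.xi hscF.neg hsF hsxi y]
  -- curvature equation for R(E,F)ξ
  have hRC := fun y => S.Rm_def E F S.xi hE hsF hsxi y
  have hkmC0 : ∀ y, S.Rm y (E y) (F y) (S.xi y) = 0 := by
    intro y
    rw [hkm y (E y) (F y), etaE y, etaF y]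
    simp [zero_smul, smul_zero]
  -- Equation C : F-component of R(E,F)ξ
  have eqC : ∀ y, dd 3 lam y (F y) = 2 * lam y * S.g y (S.nabla E E y) (F y) := by
    intro y
    have h2 : S.g y (S.nabla E (S.nabla F S.xi) y) (F y)
        - S.g y (S.nabla F (S.nabla E S.xi) y) (F y)
        - S.g y (S.nabla (S.lie E F) S.xi y) (F y) = 0 := by
      rw [← gsubl, ← gsubl, ← hRC y, hkmC0 y, map_zero]
      exact LinearMap.zero_apply _
    have hm1 := S.nabla_metric E (S.nabla F S.xi) F hE hsNFxi hsF y
    rw [fbF0, dd_const'] at hm1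
    have hp1 := pars y (S.nabla F S.xi y) (S.nabla E F y)
    rw [n3 y, aFval y, bFeq y, n14 y, n15 y, n8 y, aE0 y] at hp1
    have hm2 := S.nabla_metric F (S.nabla E S.xi) F hsF hsNExi hsF y
    rw [fbE, dd_affine' hslam (-1) (-1)] at hm2
    have hp2 := pars y (S.nabla E S.xi y) (S.nabla F F y)
    rw [n2 y, bEval y, n17 y, n18 y, n9 y, aE0 y] at hp2
    have hT3 : S.g y (S.nabla (S.lie E F) S.xi y) (F y)
        = 2 * S.g y (S.nabla S.xi S.xi y) (F y)
          + ((- S.g y (S.nabla E E y) (F y)) * S.g y (S.nabla E S.xi y) (F y)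
            + (- S.g y (S.nabla F E y) (F y)) * S.g y (S.nabla F S.xi y) (F y)) := by
      rw [hnabEF y, gaddl, gaddl, gsmull, gsmull, gsmull]
    rw [n20 y, bEval y, bFeq y, aE0 y] at hT3
    linarith
  -- Equation D : E-component of R(E,F)ξ
  have eqD : ∀ y, dd 3 lam y (E y) = - (2 * lam y * S.g y (S.nabla F E y) (F y)) := by
    intro y
    have h2 : S.g y (S.nabla E (S.nabla F S.xi) y) (E y)
        - S.g y (S.nabla F (S.nabla E S.xi) y) (E y)
        - S.g y (S.nabla (S.lie E F) S.xi y) (E y) = 0 := by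
      rw [← gsubl, ← gsubl, ← hRC y, hkmC0 y, map_zero]
      exact LinearMap.zero_apply _
    have hm1 := S.nabla_metric E (S.nabla F S.xi) E hE hsNFxi hE y
    rw [faF, dd_affine' hslam (-1) 1] at hm1
    have hp1 := pars y (S.nabla F S.xi y) (S.nabla E E y)
    rw [n3 y, aFval y, bFeq y, n13 y, n5 y, aE0 y] at hp1
    have hm2 := S.nabla_metric F (S.nabla E S.xi) E hsF hsNExi hE y
    rw [faE0, dd_const'] at hm2
    have hp2 := pars y (S.nabla E S.xi y) (S.nabla F E y)
    rw [n2 y, bEval y, n16 y, n6 y, aE0 y] at hp2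
    have hT3 : S.g y (S.nabla (S.lie E F) S.xi y) (E y)
        = 2 * S.g y (S.nabla S.xi S.xi y) (E y)
          + ((- S.g y (S.nabla E E y) (F y)) * S.g y (S.nabla E S.xi y) (E y)
            + (- S.g y (S.nabla F E y) (F y)) * S.g y (S.nabla F S.xi y) (E y)) := by
      rw [hnabEF y, gaddl, gaddl, gsmull, gsmull, gsmull]
    rw [n19 y, aFval y, aE0 y] at hT3
    linarith
  -- conclusion
  intro x
  have hL := hlampos x
  have h2L : 2 * lam x ≠ 0 := by positivity
  refine ⟨?_, ?_⟩
  · have he := expand x (S.nabla E E x)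
    rw [n13 x, aE0 x, neg_zero, zero_smul, zero_add, n5 x, zero_smul, zero_add] at he
    have hcE : S.g x (S.nabla E E x) (F x) = dd 3 lam x (F x) / (2 * lam x) := by
      have h1 := eqC x
      field_simp
      linarith
    rw [hcE] at he
    rw [← hFx x]
    exact he
  · rw [← hFdef]
    have he := expand x (S.nabla F F x)
    rw [n17 x, aE0 x, neg_zero, zero_smul, zero_add, n9 x, zero_smul, add_zero, n18 x] at he
    have hcF : - S.g x (S.nabla F E x) (F x) = dd 3 lam x (E x) / (2 * lam x) := by
      have h1 := eqD x
      field_simp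
      linarith
    rw [hcF] at he
    exact he
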